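/- Let H be a triangular Hopf algebra with R-matrix R. Then the subset Lie(H) := {ξ ∈ H : Δ(ξ) = ξ⊗1 + Σ R₂ ⊗ ad(R₁)(ξ)} is invariant under the adjoint action of H on itself: if ξ ∈ Lie(H) and h ∈ H, then ad(h)(ξ) ∈ Lie(H). -/

import Mathlib

open TensorProduct

noncomputable section

variable (k : Type*) [Field k] (H : Type*) [Ring H] [HopfAlgebra k H]

/-- The comultiplication of `H` as a linear map. -/
noncomputable def comulL : H →ₗ[k] H ⊗[k] H := Coalgebra.comul

/-- The counit of `H` as a linear map. -/
noncomputable def counitL : H →ₗ[k] k := Coalgebra.counit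

/-- The antipode of `H`. -/
noncomputable def anti : H →ₗ[k] H := HopfAlgebra.antipode (R := k)

/-- `F` together with its inverse `Finv` is a twisting (Drinfeld) cocycle:
`F` is invertible, `(Δ⊗id)(F)·(F⊗1) = (id⊗Δ)(F)·(1⊗F)` and `(ε⊗id)(F) = 1 = (id⊗ε)(F)`. -/
def IsCocycle (F Finv : H ⊗[k] H) : Prop :=
  F * Finv = 1 ∧ Finv * F = 1 ∧
  (TensorProduct.assoc k H H H) ((TensorProduct.map (comulL k H) LinearMap.id F) * (F ⊗ₜ 1))
    = (TensorProduct.map LinearMap.id (comulL k H) F) * ((1 : H) ⊗ₜ F) ∧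
  (TensorProduct.lid k H) (TensorProduct.map (counitL k H) LinearMap.id F) = 1 ∧
  (TensorProduct.rid k H) (TensorProduct.map LinearMap.id (counitL k H) F) = 1

/-- `ϑ = Σ γ(F₁)F₂`. -/
noncomputable def theta (F : H ⊗[k] H) : H :=
  LinearMap.mul' k H (TensorProduct.map (anti k H) LinearMap.id F)

/-- `ζ = Σ F̄₂ γ⁻¹(F̄₁)`, where `γinv` is the inverse of the antipode and `Finv = Σ F̄₁⊗F̄₂`. -/
noncomputable def zeta (γinv : H →ₗ[k] H) (Finv : H ⊗[k] H) : H :=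
  LinearMap.mul' k H (TensorProduct.map LinearMap.id γinv ((TensorProduct.comm k H H) Finv))

/-- `R` (with inverse `Rinv`) is a triangular structure: `R` is invertible,
`R Δ(h) = Δᵒᵖ(h) R`, the two hexagon identities `(Δ⊗id)(R) = R₁₃R₂₃`,
`(id⊗Δ)(R) = R₁₃R₁₂` hold, and `R₂₁ R = 1`. -/
def IsTriangular (R Rinv : H ⊗[k] H) : Prop :=
  R * Rinv = 1 ∧ Rinv * R = 1 ∧
  (∀ h : H, R * comulL k H h = (TensorProduct.comm k H H) (comulL k H h) * R) ∧
  (TensorProduct.assoc k H H H) (TensorProduct.map (comulL k H) LinearMap.id R)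
    = (TensorProduct.map LinearMap.id (TensorProduct.mk k H H 1) R) * ((1 : H) ⊗ₜ R) ∧
  (TensorProduct.map LinearMap.id (comulL k H) R)
    = (TensorProduct.map LinearMap.id (TensorProduct.mk k H H 1) R) *
      ((TensorProduct.assoc k H H H) (R ⊗ₜ (1 : H))) ∧
  ((TensorProduct.comm k H H) R) * R = 1

/-- `bcomp U V x y = (U x) ∘ₗ (V y)`, bilinearly in `x, y`. -/
noncomputable def bcomp {A B C : Type*} [AddCommMonoid A] [AddCommMonoid B] [AddCommMonoid C]
    [Module k A] [Module k B] [Module k C]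
    (U : H →ₗ[k] B →ₗ[k] C) (V : H →ₗ[k] A →ₗ[k] B) : H →ₗ[k] H →ₗ[k] (A →ₗ[k] C) :=
  ((((LinearMap.llcomp k A B C) ∘ₗ U).flip) ∘ₗ V).flip

/-- Given an action `α` of `H` on `M`, the induced action of `H ⊗ H` on `M ⊗ M`:
`pairAct α (x ⊗ y) (a ⊗ b) = (α x a) ⊗ (α y b)`. -/
noncomputable def pairAct {M : Type*} [AddCommMonoid M] [Module k M]
    (α : H →ₗ[k] M →ₗ[k] M) : H ⊗[k] H →ₗ[k] (M ⊗[k] M →ₗ[k] M ⊗[k] M) :=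
  (TensorProduct.homTensorHomMap (RingHom.id k) M M M M) ∘ₗ (TensorProduct.map α α)

/-- `sandwich α β (x ⊗ y) a = α x * a * β y`. -/
noncomputable def sandwich {E : Type*} [Ring E] [Algebra k E]
    (α β : H →ₗ[k] E) : H ⊗[k] H →ₗ[k] E →ₗ[k] E :=
  TensorProduct.lift (bcomp k H ((LinearMap.mul k E) ∘ₗ α) ((LinearMap.mul k E).flip ∘ₗ β))

/-- The adjoint action associated with `ρ : H →ₗ E`:
`adAct ρ h a = Σ ρ(h⁽¹⁾) a ρ(γ(h⁽²⁾))`. -/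
noncomputable def adAct {E : Type*} [Ring E] [Algebra k E]
    (ρ : H →ₗ[k] E) : H →ₗ[k] E →ₗ[k] E :=
  (sandwich k H ρ (ρ ∘ₗ anti k H)) ∘ₗ comulL k H

/-- The twisted comultiplication `Δ̃(h) = F⁻¹ Δ(h) F`. -/
noncomputable def comulTw (F Finv : H ⊗[k] H) : H →ₗ[k] H ⊗[k] H :=
  (LinearMap.mulRight k F) ∘ₗ (LinearMap.mulLeft k Finv) ∘ₗ comulL k H

/-- The twisted antipode `γ̃(h) = ϑ⁻¹ γ(h) ϑ`. -/
noncomputable def antiTw (ϑ ϑinv : H) : H →ₗ[k] H :=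
  (LinearMap.mulRight k ϑ) ∘ₗ (LinearMap.mulLeft k ϑinv) ∘ₗ anti k H

variable (A : Type*) [Ring A] [Algebra k A]

/-- `act` makes `A` a left `H`-module algebra:
`act` is a representation of `H`, `h•(ab) = Σ (h⁽¹⁾•a)(h⁽²⁾•b)` and `h•1 = ε(h)1`. -/
def IsModAlg (act : H →ₗ[k] Module.End k A) : Prop :=
  act 1 = 1 ∧ (∀ g h : H, act (g * h) = act g * act h) ∧
  (∀ (h : H) (a b : A),
    act h (a * b) = LinearMap.mul' k A ((pairAct k H act) (comulL k H h) (a ⊗ₜ b))) ∧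
  (∀ h : H, act h 1 = (counitL k H h) • (1 : A))

/-- The adjoint-type action of `H` on `End_k(A)`: `h.X = Σ ρ(h⁽¹⁾) ∘ X ∘ ρ(γ(h⁽²⁾))`. -/
noncomputable def dotAct (act : H →ₗ[k] Module.End k A) :
    H →ₗ[k] Module.End k A →ₗ[k] Module.End k A :=
  (sandwich k H (E := Module.End k A) act (act ∘ₗ anti k H)) ∘ₗ comulL k H

section LieH

/-- `ξ ∈ H` is quasi-primitive with respect to a comultiplication-type map `δ`, an
adjoint-type action `ad'` and an `R`-matrix `R₀`:
`δ(ξ) = ξ ⊗ 1 + Σ R₂ ⊗ ad'(R₁)(ξ)`. -/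
def IsQuasiPrimitive (δ : H →ₗ[k] H ⊗[k] H) (ad' : H →ₗ[k] H →ₗ[k] H)
    (R₀ : H ⊗[k] H) (ξ : H) : Prop :=
  δ ξ = ξ ⊗ₜ (1 : H) +
    (TensorProduct.map LinearMap.id (ad'.flip ξ)) ((TensorProduct.comm k H H) R₀)

end LieH
section Infra
open Coalgebra

variable {k H}

/-- Trilinear map `(x,y,z) ↦ F x * G y * K z` with values in an algebra. -/
noncomputable def tri3 {B : Type*} [Ring B] [Algebra k B] (F G K : H →ₗ[k] B) :
    H →ₗ[k] H →ₗ[k] H →ₗ[k] B :=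
  ((((LinearMap.mul k B) ∘ₗ F).compl₂ G).compr₂ ((LinearMap.mul k B).compl₂ K))

@[simp] lemma tri3_apply {B : Type*} [Ring B] [Algebra k B] (F G K : H →ₗ[k] B) (x y z : H) :
    tri3 F G K x y z = F x * G y * K z := rfl

/-- Sweedler coassociativity workhorse. -/
lemma S3 {X : Type*} [AddCommMonoid X] [Module k X] (Φ : H →ₗ[k] H →ₗ[k] H →ₗ[k] X)
    {ι : Type*} {κ Λ : ι → Type*}
    (a : H) (r : Coalgebra.Repr k a ι) (r₁ : (i : r.ι) → Coalgebra.Repr k (r.left i) (κ i))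
    (r₂ : (i : r.ι) → Coalgebra.Repr k (r.right i) (Λ i)) :
    ∑ i ∈ r.index, ∑ j ∈ (r₁ i).index,
      Φ ((r₁ i).left j) ((r₁ i).right j) (r.right i)
    = ∑ i ∈ r.index, ∑ j ∈ (r₂ i).index,
      Φ (r.left i) ((r₂ i).left j) ((r₂ i).right j) := by
  have h := Coalgebra.sum_tmul_tmul_eq r r₁ r₂
  have := congrArg (TensorProduct.lift ((TensorProduct.uncurry (RingHom.id k) H H X) ∘ₗ Φ)) h
  simpa [map_sum] using this

/-- Product representation: `Δ(ab) = Δa · Δb`. -/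
noncomputable def Repr.mul {ι κ : Type*} {a b : H} (ra : Coalgebra.Repr k a ι) (rb : Coalgebra.Repr k b κ) :
    Coalgebra.Repr k (a * b) (ι × κ) where
  index := ra.index ×ˢ rb.index
  left := fun p => ra.left p.1 * rb.left p.2
  right := fun p => ra.right p.1 * rb.right p.2
  eq := by
    rw [Bialgebra.comul_mul, ← ra.eq, ← rb.eq, Finset.sum_mul_sum]
    rw [Finset.sum_product]
    simp [Algebra.TensorProduct.tmul_mul_tmul]

@[simp] lemma Repr.mul_index {ι κ : Type*} {a b : H} (ra : Coalgebra.Repr k a ι) (rb : Coalgebra.Repr k b κ) :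
    (Repr.mul ra rb).index = ra.index ×ˢ rb.index := rfl
@[simp] lemma Repr.mul_left {ι κ : Type*} {a b : H} (ra : Coalgebra.Repr k a ι) (rb : Coalgebra.Repr k b κ)
    (p : ra.ι × rb.ι) : (Repr.mul ra rb).left p = ra.left p.1 * rb.left p.2 := rfl
@[simp] lemma Repr.mul_right {ι κ : Type*} {a b : H} (ra : Coalgebra.Repr k a ι) (rb : Coalgebra.Repr k b κ)
    (p : ra.ι × rb.ι) : (Repr.mul ra rb).right p = ra.right p.1 * rb.right p.2 := rfl

/-- counit collapse: `∑ ε(a₂) • a₁ = a`. -/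
lemma sum_counit_right_smul {a : H} {ι : Type*} (r : Coalgebra.Repr k a ι) :
    ∑ i ∈ r.index, counit (R := k) (r.right i) • r.left i = a := by
  have h := congrArg (TensorProduct.rid k H) (Coalgebra.sum_tmul_counit_eq r)
  rw [map_sum] at h
  simp only [TensorProduct.rid_tmul, one_smul] at h
  exact h

/-- counit collapse: `∑ ε(a₁) • a₂ = a`. -/
lemma sum_counit_left_smul {a : H} {ι : Type*} (r : Coalgebra.Repr k a ι) :
    ∑ i ∈ r.index, counit (R := k) (r.left i) • r.right i = a := by
  have h := congrArg (TensorProduct.lid k H) (Coalgebra.sum_counit_tmul_eq r)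
  rw [map_sum] at h
  simp only [TensorProduct.lid_tmul, one_smul] at h
  exact h

/-- Expansion of the adjoint action along a representation of the comultiplication. -/
lemma ad_repr (c t : H) {ι : Type*} (rc : Coalgebra.Repr k c ι) :
    adAct k H LinearMap.id c t
      = ∑ m ∈ rc.index, rc.left m * t * anti k H (rc.right m) := by
  show (sandwich k H LinearMap.id (LinearMap.id ∘ₗ anti k H)) (comulL k H c) t = _
  rw [show comulL k H c = ∑ m ∈ rc.index, rc.left m ⊗ₜ[k] rc.right m from rc.eq.symm]
  simp [sandwich, bcomp, map_sum, LinearMap.sum_apply, mul_assoc]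


@[simp] lemma anti_eq : anti k H = HopfAlgebra.antipode (R := k) := rfl

lemma anti_one : anti k H (1 : H) = 1 := by
  have h := HopfAlgebra.mul_antipode_rTensor_comul_apply (R := k) (a := (1 : H))
  rw [Bialgebra.comul_one, Algebra.TensorProduct.one_def] at h
  simpa using h

/-- collapse `∑ L·c₁·(γ(c₂)·R) = ε(c)•(L·R)`. -/
lemma sumA {c : H} {ι : Type*} (rc : Coalgebra.Repr k c ι) (L R : H) :
    ∑ m ∈ rc.index, L * rc.left m * (anti k H (rc.right m) * R)
      = counit (R := k) c • (L * R) := by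
  have key : ∑ m ∈ rc.index, L * rc.left m * (anti k H (rc.right m) * R)
      = L * (∑ m ∈ rc.index, rc.left m * HopfAlgebra.antipode (R := k) (rc.right m)) * R := by
    rw [Finset.mul_sum, Finset.sum_mul]
    refine Finset.sum_congr rfl fun m _ => by simp [mul_assoc]
  rw [key, HopfAlgebra.sum_mul_antipode_eq_smul]
  simp [smul_mul_assoc, mul_smul_comm]

/-- collapse `∑ γ(c₁)·(c₂·R) = ε(c)•R`. -/
lemma sumB {c : H} {ι : Type*} (rc : Coalgebra.Repr k c ι) (R : H) :
    ∑ m ∈ rc.index, anti k H (rc.left m) * (rc.right m * R)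
      = counit (R := k) c • R := by
  have key : ∑ m ∈ rc.index, anti k H (rc.left m) * (rc.right m * R)
      = (∑ m ∈ rc.index, HopfAlgebra.antipode (R := k) (rc.left m) * rc.right m) * R := by
    rw [Finset.sum_mul]
    refine Finset.sum_congr rfl fun m _ => by simp [mul_assoc]
  rw [key, HopfAlgebra.sum_antipode_mul_eq_smul, smul_mul_assoc, one_mul]

lemma sum_counit_smul_map {a : H} {ι : Type*} (r : Coalgebra.Repr k a ι) {M : Type*} [AddCommMonoid M]
    [Module k M] (f : H →ₗ[k] M) :
    ∑ i ∈ r.index, counit (R := k) (r.left i) • f (r.right i) = f a := by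
  simp_rw [← map_smul, ← map_sum, sum_counit_left_smul]

lemma sum_counit_smul_map' {a : H} {ι : Type*} (r : Coalgebra.Repr k a ι) {M : Type*} [AddCommMonoid M]
    [Module k M] (f : H →ₗ[k] M) :
    ∑ i ∈ r.index, counit (R := k) (r.right i) • f (r.left i) = f a := by
  simp_rw [← map_smul, ← map_sum, sum_counit_right_smul]

/-- The antipode is anti-multiplicative. -/
lemma anti_mul (a b : H) : anti k H (a * b) = anti k H b * anti k H a := by
  classical
  set γ := anti k H with hγ
  set ra := ℛ k a
  set rb := ℛ k b
  set ra1 : (i : ra.ι) → Coalgebra.Repr k (ra.left i) (H × H) := fun i => ℛ k (ra.left i) with hra1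
  set ra2 : (i : ra.ι) → Coalgebra.Repr k (ra.right i) (H × H) := fun i => ℛ k (ra.right i) with hra2
  set rb1 : (p : rb.ι) → Coalgebra.Repr k (rb.left p) (H × H) := fun p => ℛ k (rb.left p) with hrb1
  set rb2 : (p : rb.ι) → Coalgebra.Repr k (rb.right p) (H × H) := fun p => ℛ k (rb.right p) with hrb2
  have eval1 : ∑ i ∈ ra.index, ∑ p ∈ rb.index, ∑ j ∈ (ra1 i).index, ∑ q ∈ (rb1 p).index,
      γ ((ra1 i).left j * (rb1 p).left q)
        * (((ra1 i).right j * (rb1 p).right q) * (γ (rb.right p) * γ (ra.right i)))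
      = γ b * γ a := by
    have inner : ∀ (i : ra.ι) (p : rb.ι),
        ∑ j ∈ (ra1 i).index, ∑ q ∈ (rb1 p).index,
          γ ((ra1 i).left j * (rb1 p).left q)
            * (((ra1 i).right j * (rb1 p).right q) * (γ (rb.right p) * γ (ra.right i)))
        = (counit (R := k) (ra.left i) * counit (R := k) (rb.left p))
            • (γ (rb.right p) * γ (ra.right i)) := by
      intro i p
      have hP := sumB (Repr.mul (ra1 i) (rb1 p)) (γ (rb.right p) * γ (ra.right i))
      exact ((Finset.sum_product ((ra1 i).index) ((rb1 p).index) _).symm.trans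
        (hP.trans (by rw [Bialgebra.counit_mul])))
    rw [Finset.sum_congr rfl fun i _ => Finset.sum_congr rfl fun p _ => inner i p]
    have hb : ∑ p ∈ rb.index, counit (R := k) (rb.left p) • γ (rb.right p) = γ b :=
      sum_counit_smul_map rb γ
    have ha : ∑ i ∈ ra.index, counit (R := k) (ra.left i) • γ (ra.right i) = γ a :=
      sum_counit_smul_map ra γ
    rw [← hb, ← ha, Finset.sum_mul_sum, Finset.sum_comm]
    refine Finset.sum_congr rfl fun i _ => Finset.sum_congr rfl fun p _ => ?_
    rw [smul_mul_smul_comm, mul_comm]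
  have eval2 : ∑ i ∈ ra.index, ∑ p ∈ rb.index, ∑ j ∈ (ra1 i).index, ∑ q ∈ (rb1 p).index,
      γ ((ra1 i).left j * (rb1 p).left q)
        * (((ra1 i).right j * (rb1 p).right q) * (γ (rb.right p) * γ (ra.right i)))
      = γ (a * b) := by
    -- step 1 : collapse the `b`-legs
    have step1 : ∀ (i : ra.ι) (j : (ra1 i).ι),
        ∑ p ∈ rb.index, ∑ q ∈ (rb1 p).index,
          γ ((ra1 i).left j * (rb1 p).left q)
            * (((ra1 i).right j * (rb1 p).right q) * (γ (rb.right p) * γ (ra.right i)))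
        = γ ((ra1 i).left j * b) * ((ra1 i).right j * γ (ra.right i)) := by
      intro i j
      set A₁ := (ra1 i).left j
      set A₂ := (ra1 i).right j
      set E := γ (ra.right i)
      have hS := S3 (tri3 (γ ∘ₗ LinearMap.mulLeft k A₁)
          (LinearMap.mulLeft k A₂)
          (LinearMap.mulRight k E ∘ₗ γ)) b rb rb1 rb2
      simp only [tri3_apply, LinearMap.comp_apply, LinearMap.mulLeft_apply,
        LinearMap.mulRight_apply] at hS
      calc ∑ p ∈ rb.index, ∑ q ∈ (rb1 p).index,
            γ (A₁ * (rb1 p).left q) * ((A₂ * (rb1 p).right q) * (γ (rb.right p) * E))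
          = ∑ p ∈ rb.index, ∑ q ∈ (rb1 p).index,
            γ (A₁ * (rb1 p).left q) * (A₂ * (rb1 p).right q) * (γ (rb.right p) * E) := by
            refine Finset.sum_congr rfl fun p _ => Finset.sum_congr rfl fun q _ => by
              simp only [mul_assoc]
        _ = ∑ p ∈ rb.index, ∑ q ∈ (rb2 p).index,
            γ (A₁ * rb.left p) * (A₂ * (rb2 p).left q) * (γ ((rb2 p).right q) * E) := hS
        _ = ∑ p ∈ rb.index, counit (R := k) (rb.right p) • (γ (A₁ * rb.left p) * (A₂ * E)) := by
            refine Finset.sum_congr rfl fun p _ => ?_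
            have h2 := sumA (rb2 p) (γ (A₁ * rb.left p) * A₂) E
            refine Eq.trans (Finset.sum_congr rfl fun q _ => ?_) (h2.trans ?_)
            · simp only [hγ, anti_eq, mul_assoc]
            · simp only [mul_assoc]
        _ = γ (A₁ * b) * (A₂ * E) := by
            have h3 := sum_counit_smul_map' rb
              (LinearMap.mulRight k (A₂ * E) ∘ₗ γ ∘ₗ LinearMap.mulLeft k A₁)
            simpa only [LinearMap.comp_apply, LinearMap.mulRight_apply,
              LinearMap.mulLeft_apply, mul_assoc] using h3
    calc ∑ i ∈ ra.index, ∑ p ∈ rb.index, ∑ j ∈ (ra1 i).index, ∑ q ∈ (rb1 p).index,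
          γ ((ra1 i).left j * (rb1 p).left q)
            * (((ra1 i).right j * (rb1 p).right q) * (γ (rb.right p) * γ (ra.right i)))
        = ∑ i ∈ ra.index, ∑ j ∈ (ra1 i).index, ∑ p ∈ rb.index, ∑ q ∈ (rb1 p).index,
          γ ((ra1 i).left j * (rb1 p).left q)
            * (((ra1 i).right j * (rb1 p).right q) * (γ (rb.right p) * γ (ra.right i))) :=
          Finset.sum_congr rfl fun i _ => Finset.sum_comm

      _ = ∑ i ∈ ra.index, ∑ j ∈ (ra1 i).index,
            γ ((ra1 i).left j * b) * ((ra1 i).right j * γ (ra.right i)) :=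
          Finset.sum_congr rfl fun i _ => Finset.sum_congr rfl fun j _ => step1 i j
      _ = ∑ i ∈ ra.index, ∑ j ∈ (ra1 i).index,
            γ ((ra1 i).left j * b) * (ra1 i).right j * γ (ra.right i) :=
          Finset.sum_congr rfl fun i _ => Finset.sum_congr rfl fun j _ => by rw [mul_assoc]
      _ = ∑ i ∈ ra.index, ∑ n ∈ (ra2 i).index,
            γ (ra.left i * b) * (ra2 i).left n * γ ((ra2 i).right n) := by
          have hS := S3 (tri3 (γ ∘ₗ LinearMap.mulRight k b) LinearMap.id γ) a ra ra1 ra2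
          simpa only [tri3_apply, LinearMap.comp_apply, LinearMap.mulRight_apply,
            LinearMap.id_apply] using hS
      _ = ∑ i ∈ ra.index, counit (R := k) (ra.right i) • γ (ra.left i * b) := by
          refine Finset.sum_congr rfl fun i _ => ?_
          have := sumA (ra2 i) (γ (ra.left i * b)) 1
          simp only [mul_one] at this
          rw [← this]
      _ = γ (a * b) := by
          simpa using sum_counit_smul_map' ra (γ ∘ₗ LinearMap.mulRight k b)
  rw [← eval1, eval2]


/-- adjoint action is multiplicative. -/
lemma ad_mul (c q t : H) :
    adAct k H LinearMap.id (c * q) t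
      = adAct k H LinearMap.id c (adAct k H LinearMap.id q t) := by
  classical
  set rc := ℛ k c
  set rq := ℛ k q
  rw [ad_repr (c * q) t (Repr.mul rc rq), ad_repr c _ rc, ad_repr q t rq]
  refine Eq.trans (Finset.sum_product ..) ?_
  refine Finset.sum_congr rfl fun i _ => ?_
  rw [Finset.mul_sum, Finset.sum_mul]
  refine Finset.sum_congr rfl fun j _ => ?_
  simp only [Repr.mul_left, Repr.mul_right, anti_mul, mul_assoc]

/-- `comm` is multiplicative on `H ⊗ H`. -/
lemma comm_mul (x y : H ⊗[k] H) :
    (TensorProduct.comm k H H) (x * y)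
      = (TensorProduct.comm k H H) x * (TensorProduct.comm k H H) y := by
  induction x using TensorProduct.induction_on with
  | zero => simp
  | tmul a b =>
    induction y using TensorProduct.induction_on with
    | zero => simp
    | tmul c d => simp [Algebra.TensorProduct.tmul_mul_tmul]
    | add y₁ y₂ hy₁ hy₂ => simp [mul_add, hy₁, hy₂]
  | add x₁ x₂ hx₁ hx₂ => simp [add_mul, hx₁, hx₂]

/-- `K = τ ∘ (γ ⊗ γ) ∘ Δ`. -/
noncomputable def Kmap : H →ₗ[k] H ⊗[k] H :=
  (TensorProduct.comm k H H).toLinearMap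
    ∘ₗ (TensorProduct.map (anti k H) (anti k H)) ∘ₗ comulL k H

lemma Kmap_repr (x : H) {ι : Type*} (rx : Coalgebra.Repr k x ι) :
    Kmap (k := k) (H := H) x
      = ∑ m ∈ rx.index, anti k H (rx.right m) ⊗ₜ[k] anti k H (rx.left m) := by
  have : comulL k H x = ∑ m ∈ rx.index, rx.left m ⊗ₜ[k] rx.right m := rx.eq.symm
  rw [Kmap, LinearMap.comp_apply, LinearMap.comp_apply, this]
  simp [map_sum]

/-- collapse in `H ⊗ H`, first slot, antipode left. -/
lemma sumB' {c : H} {ι : Type*} (rc : Coalgebra.Repr k c ι) (L R : H ⊗[k] H) :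
    ∑ m ∈ rc.index, L * (anti k H (rc.left m) ⊗ₜ[k] (1 : H))
        * ((rc.right m ⊗ₜ[k] (1 : H)) * R)
      = counit (R := k) c • (L * R) := by
  have key : ∀ m, L * (anti k H (rc.left m) ⊗ₜ[k] (1 : H)) * ((rc.right m ⊗ₜ[k] (1 : H)) * R)
      = L * (((HopfAlgebra.antipode (R := k) (rc.left m) * rc.right m) ⊗ₜ[k] (1 : H)) * R) := by
    intro m
    rw [mul_assoc, ← mul_assoc (anti k H (rc.left m) ⊗ₜ[k] (1 : H)),
      Algebra.TensorProduct.tmul_mul_tmul, one_mul]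
    rfl
  rw [Finset.sum_congr rfl fun m _ => key m, ← Finset.mul_sum, ← Finset.sum_mul,
    ← TensorProduct.sum_tmul, HopfAlgebra.sum_antipode_mul_eq_smul]
  rw [← TensorProduct.smul_tmul', show ((1:H) ⊗ₜ[k] (1:H)) = (1 : H ⊗[k] H) from rfl,
    smul_mul_assoc, one_mul, mul_smul_comm]

/-- collapse in `H ⊗ H`, second slot, antipode right. -/
lemma sumA' {c : H} {ι : Type*} (rc : Coalgebra.Repr k c ι) (L R : H ⊗[k] H) :
    ∑ m ∈ rc.index, L * ((1 : H) ⊗ₜ[k] rc.left m)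
        * (((1 : H) ⊗ₜ[k] anti k H (rc.right m)) * R)
      = counit (R := k) c • (L * R) := by
  have key : ∀ m, L * ((1 : H) ⊗ₜ[k] rc.left m) * (((1 : H) ⊗ₜ[k] anti k H (rc.right m)) * R)
      = L * (((1 : H) ⊗ₜ[k] (rc.left m * HopfAlgebra.antipode (R := k) (rc.right m))) * R) := by
    intro m
    rw [mul_assoc, ← mul_assoc ((1 : H) ⊗ₜ[k] rc.left m),
      Algebra.TensorProduct.tmul_mul_tmul, one_mul]
    rfl
  rw [Finset.sum_congr rfl fun m _ => key m, ← Finset.mul_sum, ← Finset.sum_mul,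
    ← TensorProduct.tmul_sum, HopfAlgebra.sum_mul_antipode_eq_smul]
  rw [TensorProduct.tmul_smul, show ((1:H) ⊗ₜ[k] (1:H)) = (1 : H ⊗[k] H) from rfl,
    smul_mul_assoc, one_mul, mul_smul_comm]


/-- `F₁ z = z ⊗ 1`. -/
noncomputable def F₁ : H →ₗ[k] H ⊗[k] H := (TensorProduct.mk k H H).flip 1
/-- `G₁ z = 1 ⊗ z`. -/
noncomputable def G₁ : H →ₗ[k] H ⊗[k] H := TensorProduct.mk k H H 1

@[simp] lemma F₁_apply (z : H) : F₁ (k := k) z = z ⊗ₜ[k] (1 : H) := rfl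
@[simp] lemma G₁_apply (z : H) : G₁ (k := k) z = (1 : H) ⊗ₜ[k] z := rfl

/-- Fact: `∑ K(x₁) Δ(x₂) = ε(x) 1`. -/
lemma KconvD (x : H) {ι : Type*} (rx : Coalgebra.Repr k x ι) :
    ∑ i ∈ rx.index, Kmap (rx.left i) * comulL k H (rx.right i)
      = counit (R := k) x • (1 : H ⊗[k] H) := by
  classical
  set γ := anti k H with hγ
  set rx1 : (i : rx.ι) → Coalgebra.Repr k (rx.left i) (H × H) := fun i => ℛ k (rx.left i) with hrx1
  set rx2 : (i : rx.ι) → Coalgebra.Repr k (rx.right i) (H × H) := fun i => ℛ k (rx.right i) with hrx2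
  have e1 : ∀ i, Kmap (rx.left i) * comulL k H (rx.right i)
      = ∑ j ∈ (rx1 i).index,
          tri3 (G₁ ∘ₗ γ) (F₁ ∘ₗ γ) (comulL k H) ((rx1 i).left j) ((rx1 i).right j)
            (rx.right i) := by
    intro i
    rw [Kmap_repr _ (rx1 i), Finset.sum_mul]
    refine Finset.sum_congr rfl fun j _ => ?_
    simp [hγ, Algebra.TensorProduct.tmul_mul_tmul]
  rw [Finset.sum_congr rfl fun i _ => e1 i,
    S3 (tri3 (G₁ ∘ₗ γ) (F₁ ∘ₗ γ) (comulL k H)) x rx rx1 rx2]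
  have e2 : ∀ i, ∑ j ∈ (rx2 i).index,
      tri3 (G₁ ∘ₗ γ) (F₁ ∘ₗ γ) (comulL k H) (rx.left i) ((rx2 i).left j) ((rx2 i).right j)
      = (1 : H) ⊗ₜ[k] (γ (rx.left i) * rx.right i) := by
    intro i
    set r21 : (n : (rx2 i).ι) → Coalgebra.Repr k ((rx2 i).left n) (H × H) :=
      fun n => ℛ k ((rx2 i).left n) with hr21
    set r22 : (n : (rx2 i).ι) → Coalgebra.Repr k ((rx2 i).right n) (H × H) :=
      fun n => ℛ k ((rx2 i).right n) with hr22
    set M : H ⊗[k] H := (1 : H) ⊗ₜ[k] γ (rx.left i) with hM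
    have f1 : ∀ n, tri3 (G₁ ∘ₗ γ) (F₁ ∘ₗ γ) (comulL k H) (rx.left i) ((rx2 i).left n)
          ((rx2 i).right n)
        = ∑ m ∈ (r22 n).index,
            tri3 (LinearMap.mulLeft k M ∘ₗ (F₁ ∘ₗ γ)) F₁ G₁
              ((rx2 i).left n) ((r22 n).left m) ((r22 n).right m) := by
      intro n
      have hd : comulL k H ((rx2 i).right n)
          = ∑ m ∈ (r22 n).index, (r22 n).left m ⊗ₜ[k] (r22 n).right m := (r22 n).eq.symm
      simp only [tri3_apply, LinearMap.comp_apply, LinearMap.mulLeft_apply, F₁_apply, G₁_apply,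
        hd, Finset.mul_sum]
      refine Finset.sum_congr rfl fun m _ => ?_
      simp [Algebra.TensorProduct.tmul_mul_tmul, hM, mul_assoc]
    rw [Finset.sum_congr rfl fun n _ => f1 n,
      ← S3 (tri3 (LinearMap.mulLeft k M ∘ₗ (F₁ ∘ₗ γ)) F₁ G₁) (rx.right i) (rx2 i) r21 r22]
    have f2 : ∀ n, ∑ m ∈ (r21 n).index,
        tri3 (LinearMap.mulLeft k M ∘ₗ (F₁ ∘ₗ γ)) F₁ G₁
          ((r21 n).left m) ((r21 n).right m) ((rx2 i).right n)
        = counit (R := k) ((rx2 i).left n) • (M * ((1:H) ⊗ₜ[k] (rx2 i).right n)) := by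
      intro n
      have hc := sumB' (r21 n) M ((1:H) ⊗ₜ[k] (rx2 i).right n)
      refine Eq.trans (Finset.sum_congr rfl fun m _ => ?_) hc
      simp only [tri3_apply, LinearMap.comp_apply, LinearMap.mulLeft_apply, F₁_apply, G₁_apply,
        hγ, mul_assoc]
    rw [Finset.sum_congr rfl fun n _ => f2 n]
    have f3 := sum_counit_smul_map (rx2 i)
      (LinearMap.mulLeft k M ∘ₗ (G₁ (k := k) (H := H)))
    simp only [LinearMap.comp_apply, LinearMap.mulLeft_apply, G₁_apply] at f3
    rw [f3, hM, Algebra.TensorProduct.tmul_mul_tmul, one_mul]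
  rw [Finset.sum_congr rfl fun i _ => e2 i, ← TensorProduct.tmul_sum]
  rw [show ∑ i ∈ rx.index, γ (rx.left i) * rx.right i = counit (R := k) x • 1 from
    HopfAlgebra.sum_antipode_mul_eq_smul rx]
  rw [TensorProduct.tmul_smul, show ((1:H) ⊗ₜ[k] (1:H)) = (1 : H ⊗[k] H) from rfl]

/-- The antipode is anti-comultiplicative: `Δ ∘ γ = τ ∘ (γ ⊗ γ) ∘ Δ`. -/
lemma comulK (x : H) : comulL k H (anti k H x) = Kmap (k := k) x := by
  classical
  set γ := anti k H with hγ
  set rx := ℛ k x with hrx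
  set rx1 : (i : rx.ι) → Coalgebra.Repr k (rx.left i) (H × H) := fun i => ℛ k (rx.left i) with hrx1
  set rx2 : (i : rx.ι) → Coalgebra.Repr k (rx.right i) (H × H) := fun i => ℛ k (rx.right i) with hrx2
  have eval1 : ∑ i ∈ rx.index, ∑ n ∈ (rx2 i).index,
      Kmap (rx.left i) * comulL k H ((rx2 i).left n * γ ((rx2 i).right n))
      = Kmap (k := k) x := by
    have g1 : ∀ i, ∑ n ∈ (rx2 i).index,
        Kmap (rx.left i) * comulL k H ((rx2 i).left n * γ ((rx2 i).right n))
        = counit (R := k) (rx.right i) • Kmap (rx.left i) := by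
      intro i
      rw [← Finset.mul_sum, ← map_sum,
        show ∑ n ∈ (rx2 i).index, (rx2 i).left n * γ ((rx2 i).right n)
          = counit (R := k) (rx.right i) • 1 from
            HopfAlgebra.sum_mul_antipode_eq_smul (rx2 i)]
      rw [map_smul, show comulL k H (1 : H) = 1 from Bialgebra.comul_one,
        mul_smul_comm, mul_one]
    rw [Finset.sum_congr rfl fun i _ => g1 i]
    exact sum_counit_smul_map' rx (Kmap (k := k) (H := H))
  have eval2 : ∑ i ∈ rx.index, ∑ n ∈ (rx2 i).index,
      Kmap (rx.left i) * comulL k H ((rx2 i).left n * γ ((rx2 i).right n))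
      = comulL k H (γ x) := by
    have g2 : ∀ i, ∀ n, Kmap (rx.left i) * comulL k H ((rx2 i).left n * γ ((rx2 i).right n))
        = tri3 (Kmap (k := k)) (comulL k H) (comulL k H ∘ₗ γ)
            (rx.left i) ((rx2 i).left n) ((rx2 i).right n) := by
      intro i n
      rw [tri3_apply]
      rw [show comulL k H ((rx2 i).left n * γ ((rx2 i).right n))
        = comulL k H ((rx2 i).left n) * comulL k H (γ ((rx2 i).right n)) from
          Bialgebra.comul_mul _ _]
      rw [mul_assoc]
      rfl
    rw [Finset.sum_congr rfl fun i _ => Finset.sum_congr rfl fun n _ => g2 i n,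
      ← S3 (tri3 (Kmap (k := k)) (comulL k H) (comulL k H ∘ₗ γ)) x rx rx1 rx2]
    have g3 : ∀ i, ∑ j ∈ (rx1 i).index,
        tri3 (Kmap (k := k)) (comulL k H) (comulL k H ∘ₗ γ)
          ((rx1 i).left j) ((rx1 i).right j) (rx.right i)
        = counit (R := k) (rx.left i) • comulL k H (γ (rx.right i)) := by
      intro i
      have := KconvD (rx.left i) (rx1 i)
      simp only [tri3_apply, LinearMap.comp_apply]
      rw [← Finset.sum_mul, this, smul_mul_assoc, one_mul]
    rw [Finset.sum_congr rfl fun i _ => g3 i]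
    exact sum_counit_smul_map rx (comulL k H ∘ₗ γ)
  rw [← eval2, eval1]


lemma comm_comm (y : H ⊗[k] H) :
    (TensorProduct.comm k H H) ((TensorProduct.comm k H H) y) = y := by
  induction y using TensorProduct.induction_on with
  | zero => simp
  | tmul a b => simp
  | add y₁ y₂ h₁ h₂ => simp [h₁, h₂]

lemma comulL_mul (x y : H) : comulL k H (x * y) = comulL k H x * comulL k H y :=
  Bialgebra.comul_mul x y

/-- `(id ⊗ ad(·)(ad x ξ)) u = (id ⊗ ad(·)ξ)(u (1 ⊗ x))`. -/
lemma u1 (u : H ⊗[k] H) (ξ x : H) :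
    (TensorProduct.map LinearMap.id
        ((adAct k H LinearMap.id).flip (adAct k H LinearMap.id x ξ))) u
      = (TensorProduct.map LinearMap.id ((adAct k H LinearMap.id).flip ξ))
          (u * ((1 : H) ⊗ₜ[k] x)) := by
  induction u using TensorProduct.induction_on with
  | zero => simp
  | tmul p q => simp [Algebra.TensorProduct.tmul_mul_tmul, ad_mul, LinearMap.flip_apply]
  | add u₁ u₂ h₁ h₂ => simp only [map_add, add_mul, h₁, h₂]

/-- left equivariance of `id ⊗ φ` in the first slot. -/
lemma u2L (w : H ⊗[k] H) (ξ x : H) :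
    (TensorProduct.map LinearMap.id ((adAct k H LinearMap.id).flip ξ))
        ((x ⊗ₜ[k] (1 : H)) * w)
      = (x ⊗ₜ[k] (1 : H))
          * (TensorProduct.map LinearMap.id ((adAct k H LinearMap.id).flip ξ)) w := by
  induction w using TensorProduct.induction_on with
  | zero => simp
  | tmul p q => simp [Algebra.TensorProduct.tmul_mul_tmul]
  | add w₁ w₂ h₁ h₂ => simp only [map_add, mul_add, h₁, h₂]

/-- right equivariance of `id ⊗ φ` in the first slot. -/
lemma u2R (w : H ⊗[k] H) (ξ z : H) :
    (TensorProduct.map LinearMap.id ((adAct k H LinearMap.id).flip ξ))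
        (w * (z ⊗ₜ[k] (1 : H)))
      = (TensorProduct.map LinearMap.id ((adAct k H LinearMap.id).flip ξ)) w
          * (z ⊗ₜ[k] (1 : H)) := by
  induction w using TensorProduct.induction_on with
  | zero => simp
  | tmul p q => simp [Algebra.TensorProduct.tmul_mul_tmul]
  | add w₁ w₂ h₁ h₂ => simp only [map_add, add_mul, h₁, h₂]

/-- middle collapse for the `B`-chain. -/
lemma u3 (u : H ⊗[k] H) (ξ c : H) {ι : Type*} (rc : Coalgebra.Repr k c ι) :
    ∑ m ∈ rc.index, ((1 : H) ⊗ₜ[k] rc.left m)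
        * (TensorProduct.map LinearMap.id ((adAct k H LinearMap.id).flip ξ)) u
        * ((1 : H) ⊗ₜ[k] anti k H (rc.right m))
      = (TensorProduct.map LinearMap.id ((adAct k H LinearMap.id).flip ξ))
          (((1 : H) ⊗ₜ[k] c) * u) := by
  induction u using TensorProduct.induction_on with
  | zero => simp
  | tmul p q =>
    simp only [TensorProduct.map_tmul, LinearMap.id_coe, id_eq, LinearMap.flip_apply,
      Algebra.TensorProduct.tmul_mul_tmul, one_mul, mul_one]
    rw [← TensorProduct.tmul_sum, ← ad_repr c (adAct k H LinearMap.id q ξ) rc, ← ad_mul]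
  | add u₁ u₂ h₁ h₂ =>
    simp only [map_add, mul_add, add_mul, Finset.sum_add_distrib, h₁, h₂]

/-- key identity `∑ Δ(h₁) u (γ(h₂) ⊗ 1) = u (1 ⊗ h)`. -/
lemma I1 (u : H ⊗[k] H)
    (hQT : ∀ x : H, u * (TensorProduct.comm k H H) (comulL k H x) = comulL k H x * u)
    (g : H) {ι : Type*} (rg : Coalgebra.Repr k g ι)
    {κ Λ : ι → Type*}
    (rg1 : (i : rg.ι) → Coalgebra.Repr k (rg.left i) (κ i))
    (rg2 : (i : rg.ι) → Coalgebra.Repr k (rg.right i) (Λ i)) :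
    ∑ i ∈ rg.index, ∑ n ∈ (rg2 i).index,
        (rg.left i ⊗ₜ[k] (rg2 i).left n) * u * (anti k H ((rg2 i).right n) ⊗ₜ[k] (1 : H))
      = u * ((1 : H) ⊗ₜ[k] g) := by
  classical
  set γ := anti k H with hγ
  set Ξ := tri3 (F₁ (k := k) (H := H)) G₁
    (LinearMap.mulLeft k u ∘ₗ F₁ ∘ₗ γ) with hΞ
  have bridge : ∀ x y z : H, Ξ x y z = (x ⊗ₜ[k] y) * u * (γ z ⊗ₜ[k] (1 : H)) := by
    intro x y z
    simp only [hΞ, tri3_apply, LinearMap.comp_apply, LinearMap.mulLeft_apply, F₁_apply, G₁_apply]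
    rw [show (x ⊗ₜ[k] (1:H)) * ((1:H) ⊗ₜ[k] y) = x ⊗ₜ[k] y by
      rw [Algebra.TensorProduct.tmul_mul_tmul, one_mul, mul_one], mul_assoc]
  rw [Finset.sum_congr rfl fun i _ => Finset.sum_congr rfl fun n _ => (bridge _ _ _).symm,
    ← S3 Ξ g rg rg1 rg2,
    Finset.sum_congr rfl fun i _ => Finset.sum_congr rfl fun j _ => bridge _ _ _]
  have step_b : ∀ i, ∑ j ∈ (rg1 i).index,
      ((rg1 i).left j ⊗ₜ[k] (rg1 i).right j) * u * (γ (rg.right i) ⊗ₜ[k] (1 : H))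
      = u * ((TensorProduct.comm k H H) (comulL k H (rg.left i))
          * (γ (rg.right i) ⊗ₜ[k] (1 : H))) := by
    intro i
    have hl : comulL k H (rg.left i)
        = ∑ j ∈ (rg1 i).index, (rg1 i).left j ⊗ₜ[k] (rg1 i).right j := (rg1 i).eq.symm
    calc ∑ j ∈ (rg1 i).index,
          ((rg1 i).left j ⊗ₜ[k] (rg1 i).right j) * u * (γ (rg.right i) ⊗ₜ[k] (1 : H))
        = (comulL k H (rg.left i)) * u * (γ (rg.right i) ⊗ₜ[k] (1 : H)) := by
          rw [hl, Finset.sum_mul, Finset.sum_mul]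
      _ = u * (TensorProduct.comm k H H) (comulL k H (rg.left i))
            * (γ (rg.right i) ⊗ₜ[k] (1 : H)) := by rw [← hQT]
      _ = _ := by rw [mul_assoc]
  rw [Finset.sum_congr rfl fun i _ => step_b i, ← Finset.mul_sum]
  congr 1
  -- ∑ τ(Δ g₁) (γ(g₂) ⊗ 1) = 1 ⊗ g
  have W : ∑ i ∈ rg.index, ∑ j ∈ (rg1 i).index,
      ((rg1 i).left j ⊗ₜ[k] ((rg1 i).right j * γ (rg.right i))) = g ⊗ₜ[k] (1 : H) := by
    have hS := S3 (tri3 (F₁ (k := k) (H := H)) G₁ (G₁ ∘ₗ γ)) g rg rg1 rg2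
    simp only [tri3_apply, LinearMap.comp_apply, F₁_apply, G₁_apply] at hS
    have lhs_eq : ∀ (x y z : H), (x ⊗ₜ[k] (1:H)) * ((1:H) ⊗ₜ[k] y) * ((1:H) ⊗ₜ[k] γ z)
        = x ⊗ₜ[k] (y * γ z) := by
      intro x y z
      simp [Algebra.TensorProduct.tmul_mul_tmul]
    simp only [lhs_eq] at hS
    rw [hS]
    have coll : ∀ i, ∑ j ∈ (rg2 i).index,
        (rg.left i ⊗ₜ[k] ((rg2 i).left j * γ ((rg2 i).right j)))
        = counit (R := k) (rg.right i) • (rg.left i ⊗ₜ[k] (1 : H)) := by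
      intro i
      rw [← TensorProduct.tmul_sum,
        show ∑ j ∈ (rg2 i).index, (rg2 i).left j * γ ((rg2 i).right j)
          = counit (R := k) (rg.right i) • 1 from HopfAlgebra.sum_mul_antipode_eq_smul (rg2 i),
        TensorProduct.tmul_smul]
    rw [Finset.sum_congr rfl fun i _ => coll i]
    exact sum_counit_smul_map' rg ((TensorProduct.mk k H H).flip 1)
  calc ∑ i ∈ rg.index, (TensorProduct.comm k H H) (comulL k H (rg.left i))
        * (γ (rg.right i) ⊗ₜ[k] (1 : H))
      = ∑ i ∈ rg.index, ∑ j ∈ (rg1 i).index,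
          (((rg1 i).right j * γ (rg.right i)) ⊗ₜ[k] (rg1 i).left j) := by
        refine Finset.sum_congr rfl fun i _ => ?_
        rw [show comulL k H (rg.left i)
          = ∑ j ∈ (rg1 i).index, (rg1 i).left j ⊗ₜ[k] (rg1 i).right j from (rg1 i).eq.symm]
        rw [map_sum, Finset.sum_mul]
        refine Finset.sum_congr rfl fun j _ => ?_
        rw [TensorProduct.comm_tmul, Algebra.TensorProduct.tmul_mul_tmul, mul_one]
    _ = (TensorProduct.comm k H H) (∑ i ∈ rg.index, ∑ j ∈ (rg1 i).index,
          ((rg1 i).left j ⊗ₜ[k] ((rg1 i).right j * γ (rg.right i)))) := by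
        rw [map_sum]
        refine Finset.sum_congr rfl fun i _ => ?_
        rw [map_sum]
        exact Finset.sum_congr rfl fun j _ => by rw [TensorProduct.comm_tmul]
    _ = (1 : H) ⊗ₜ[k] g := by rw [W, TensorProduct.comm_tmul]


/-- A-chain: `∑ Δ(h₁) (ξ⊗1) K(h₂) = (ad h ξ) ⊗ 1`. -/
lemma chainA (ξ h : H) {ι : Type*} (rh : Coalgebra.Repr k h ι) :
    ∑ i ∈ rh.index, comulL k H (rh.left i) * (ξ ⊗ₜ[k] (1 : H)) * Kmap (rh.right i)
      = (adAct k H LinearMap.id h ξ) ⊗ₜ[k] (1 : H) := by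
  classical
  set γ := anti k H with hγ
  set rh1 : (i : rh.ι) → Coalgebra.Repr k (rh.left i) (H × H) := fun i => ℛ k (rh.left i) with hrh1
  set rh2 : (i : rh.ι) → Coalgebra.Repr k (rh.right i) (H × H) := fun i => ℛ k (rh.right i) with hrh2
  set Fξ : H →ₗ[k] H ⊗[k] H := F₁ ∘ₗ LinearMap.mulRight k ξ with hFξ
  have a1 : ∀ i, comulL k H (rh.left i) * (ξ ⊗ₜ[k] (1 : H)) * Kmap (rh.right i)
      = ∑ j ∈ (rh1 i).index, tri3 Fξ G₁ (Kmap (k := k))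
          ((rh1 i).left j) ((rh1 i).right j) (rh.right i) := by
    intro i
    rw [show comulL k H (rh.left i)
      = ∑ j ∈ (rh1 i).index, (rh1 i).left j ⊗ₜ[k] (rh1 i).right j from (rh1 i).eq.symm,
      Finset.sum_mul, Finset.sum_mul]
    refine Finset.sum_congr rfl fun j _ => ?_
    simp only [tri3_apply, hFξ, LinearMap.comp_apply, LinearMap.mulRight_apply, F₁_apply,
      G₁_apply, Algebra.TensorProduct.tmul_mul_tmul, one_mul, mul_one]
  rw [Finset.sum_congr rfl fun i _ => a1 i, S3 (tri3 Fξ G₁ (Kmap (k := k))) h rh rh1 rh2]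
  have a2 : ∀ i, ∑ n ∈ (rh2 i).index, tri3 Fξ G₁ (Kmap (k := k))
        (rh.left i) ((rh2 i).left n) ((rh2 i).right n)
      = Fξ (rh.left i) * (γ (rh.right i) ⊗ₜ[k] (1 : H)) := by
    intro i
    set r21 : (n : (rh2 i).ι) → Coalgebra.Repr k ((rh2 i).left n) (H × H) :=
      fun n => ℛ k ((rh2 i).left n) with hr21
    set r22 : (n : (rh2 i).ι) → Coalgebra.Repr k ((rh2 i).right n) (H × H) :=
      fun n => ℛ k ((rh2 i).right n) with hr22
    set Θ := tri3 (LinearMap.mulLeft k (Fξ (rh.left i)) ∘ₗ G₁ (k := k) (H := H))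
      (G₁ ∘ₗ γ) (F₁ ∘ₗ γ) with hΘ
    have a2a : ∀ n, tri3 Fξ G₁ (Kmap (k := k))
          (rh.left i) ((rh2 i).left n) ((rh2 i).right n)
        = ∑ m ∈ (r22 n).index,
            Θ ((rh2 i).left n) ((r22 n).left m) ((r22 n).right m) := by
      intro n
      rw [tri3_apply, Kmap_repr _ (r22 n), Finset.mul_sum]
      refine Finset.sum_congr rfl fun m _ => ?_
      simp only [hΘ, tri3_apply, LinearMap.comp_apply, LinearMap.mulLeft_apply, F₁_apply,
        G₁_apply, hγ]
      simp [Algebra.TensorProduct.tmul_mul_tmul, mul_assoc]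
    rw [Finset.sum_congr rfl fun n _ => a2a n, ← S3 Θ (rh.right i) (rh2 i) r21 r22]
    have a2b : ∀ n, ∑ m ∈ (r21 n).index,
        Θ ((r21 n).left m) ((r21 n).right m) ((rh2 i).right n)
        = counit (R := k) ((rh2 i).left n)
            • (Fξ (rh.left i) * (γ ((rh2 i).right n) ⊗ₜ[k] (1 : H))) := by
      intro n
      have hc := sumA' (r21 n) (Fξ (rh.left i)) (γ ((rh2 i).right n) ⊗ₜ[k] (1 : H))
      refine Eq.trans (Finset.sum_congr rfl fun m _ => ?_) hc
      simp only [hΘ, tri3_apply, LinearMap.comp_apply, LinearMap.mulLeft_apply, F₁_apply,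
        G₁_apply, hγ, mul_assoc]
    rw [Finset.sum_congr rfl fun n _ => a2b n]
    have := sum_counit_smul_map (rh2 i)
      (LinearMap.mulLeft k (Fξ (rh.left i)) ∘ₗ (F₁ (k := k) (H := H)) ∘ₗ γ)
    simpa only [LinearMap.comp_apply, LinearMap.mulLeft_apply, F₁_apply] using this
  rw [Finset.sum_congr rfl fun i _ => a2 i]
  rw [ad_repr h ξ rh, TensorProduct.sum_tmul]
  refine Finset.sum_congr rfl fun i _ => ?_
  simp only [hFξ, LinearMap.comp_apply, LinearMap.mulRight_apply, F₁_apply,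
    Algebra.TensorProduct.tmul_mul_tmul, mul_one, hγ]

/-- B-chain: `∑ Δ(h₁) (id⊗φ)(u) K(h₂) = (id⊗φ)(u (1 ⊗ h))`. -/
lemma chainB (u : H ⊗[k] H)
    (hQT : ∀ x : H, u * (TensorProduct.comm k H H) (comulL k H x) = comulL k H x * u)
    (ξ h : H) {ι : Type*} (rh : Coalgebra.Repr k h ι) :
    ∑ i ∈ rh.index, comulL k H (rh.left i)
        * (TensorProduct.map LinearMap.id ((adAct k H LinearMap.id).flip ξ)) u
        * Kmap (rh.right i)
      = (TensorProduct.map LinearMap.id ((adAct k H LinearMap.id).flip ξ))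
          (u * ((1 : H) ⊗ₜ[k] h)) := by
  classical
  set γ := anti k H with hγ
  set Λ : H ⊗[k] H →ₗ[k] H ⊗[k] H
    := TensorProduct.map LinearMap.id ((adAct k H LinearMap.id).flip ξ) with hΛ
  set M := Λ u with hM
  set rh1 : (i : rh.ι) → Coalgebra.Repr k (rh.left i) (H × H) := fun i => ℛ k (rh.left i) with hrh1
  set rh2 : (i : rh.ι) → Coalgebra.Repr k (rh.right i) (H × H) := fun i => ℛ k (rh.right i) with hrh2
  have b1 : ∀ i, comulL k H (rh.left i) * M * Kmap (rh.right i)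
      = ∑ j ∈ (rh1 i).index, tri3 (F₁ (k := k) (H := H))
          (LinearMap.mulRight k M ∘ₗ G₁) (Kmap (k := k))
          ((rh1 i).left j) ((rh1 i).right j) (rh.right i) := by
    intro i
    rw [show comulL k H (rh.left i)
      = ∑ j ∈ (rh1 i).index, (rh1 i).left j ⊗ₜ[k] (rh1 i).right j from (rh1 i).eq.symm,
      Finset.sum_mul, Finset.sum_mul]
    refine Finset.sum_congr rfl fun j _ => ?_
    simp only [tri3_apply, LinearMap.comp_apply, LinearMap.mulRight_apply, F₁_apply, G₁_apply]
    rw [show ((rh1 i).left j ⊗ₜ[k] (1:H)) * (((1:H) ⊗ₜ[k] (rh1 i).right j) * M)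
      = ((rh1 i).left j ⊗ₜ[k] (rh1 i).right j) * M by
        rw [← mul_assoc, Algebra.TensorProduct.tmul_mul_tmul, one_mul, mul_one]]
  rw [Finset.sum_congr rfl fun i _ => b1 i,
    S3 (tri3 (F₁ (k := k) (H := H)) (LinearMap.mulRight k M ∘ₗ G₁) (Kmap (k := k))) h rh rh1 rh2]
  have b2 : ∀ i, ∑ n ∈ (rh2 i).index, tri3 (F₁ (k := k) (H := H))
        (LinearMap.mulRight k M ∘ₗ G₁) (Kmap (k := k))
        (rh.left i) ((rh2 i).left n) ((rh2 i).right n)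
      = ∑ n ∈ (rh2 i).index,
          Λ ((rh.left i ⊗ₜ[k] (rh2 i).left n) * u
            * (γ ((rh2 i).right n) ⊗ₜ[k] (1 : H))) := by
    intro i
    set r21 : (n : (rh2 i).ι) → Coalgebra.Repr k ((rh2 i).left n) (H × H) :=
      fun n => ℛ k ((rh2 i).left n) with hr21
    set r22 : (n : (rh2 i).ι) → Coalgebra.Repr k ((rh2 i).right n) (H × H) :=
      fun n => ℛ k ((rh2 i).right n) with hr22
    set Θ := tri3 (LinearMap.mulLeft k (F₁ (k := k) (H := H) (rh.left i))
        ∘ₗ LinearMap.mulRight k M ∘ₗ G₁ (k := k) (H := H))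
      (G₁ ∘ₗ γ) (F₁ ∘ₗ γ) with hΘ
    have b2a : ∀ n, tri3 (F₁ (k := k) (H := H)) (LinearMap.mulRight k M ∘ₗ G₁) (Kmap (k := k))
          (rh.left i) ((rh2 i).left n) ((rh2 i).right n)
        = ∑ m ∈ (r22 n).index,
            Θ ((rh2 i).left n) ((r22 n).left m) ((r22 n).right m) := by
      intro n
      rw [tri3_apply, Kmap_repr _ (r22 n), Finset.mul_sum]
      refine Finset.sum_congr rfl fun m _ => ?_
      simp only [hΘ, tri3_apply, LinearMap.comp_apply, LinearMap.mulLeft_apply,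
        LinearMap.mulRight_apply, F₁_apply, G₁_apply, hγ]
      simp [Algebra.TensorProduct.tmul_mul_tmul, mul_assoc]
    rw [Finset.sum_congr rfl fun n _ => b2a n, ← S3 Θ (rh.right i) (rh2 i) r21 r22]
    have b2b : ∀ nn, ∑ m ∈ (r21 nn).index,
        Θ ((r21 nn).left m) ((r21 nn).right m) ((rh2 i).right nn)
        = F₁ (k := k) (H := H) (rh.left i) * Λ (((1:H) ⊗ₜ[k] (rh2 i).left nn) * u)
            * (γ ((rh2 i).right nn) ⊗ₜ[k] (1 : H)) := by
      intro nn
      have hu3 := u3 u ξ ((rh2 i).left nn) (r21 nn)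
      calc ∑ m ∈ (r21 nn).index,
            Θ ((r21 nn).left m) ((r21 nn).right m) ((rh2 i).right nn)
          = ∑ m ∈ (r21 nn).index,
              F₁ (k := k) (H := H) (rh.left i)
                * (((1:H) ⊗ₜ[k] (r21 nn).left m) * M * ((1:H) ⊗ₜ[k] γ ((r21 nn).right m)))
                * (γ ((rh2 i).right nn) ⊗ₜ[k] (1 : H)) := by
            refine Finset.sum_congr rfl fun m _ => ?_
            simp only [hΘ, tri3_apply, LinearMap.comp_apply, LinearMap.mulLeft_apply,
              LinearMap.mulRight_apply, F₁_apply, G₁_apply, hγ, mul_assoc]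
        _ = F₁ (k := k) (H := H) (rh.left i)
              * (∑ m ∈ (r21 nn).index,
                  ((1:H) ⊗ₜ[k] (r21 nn).left m) * M * ((1:H) ⊗ₜ[k] γ ((r21 nn).right m)))
              * (γ ((rh2 i).right nn) ⊗ₜ[k] (1 : H)) := by
            rw [Finset.mul_sum, Finset.sum_mul]
        _ = _ := by
            rw [show (∑ m ∈ (r21 nn).index,
              ((1:H) ⊗ₜ[k] (r21 nn).left m) * M * ((1:H) ⊗ₜ[k] γ ((r21 nn).right m)))
              = Λ (((1:H) ⊗ₜ[k] (rh2 i).left nn) * u) from hu3]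
    rw [Finset.sum_congr rfl fun nn _ => b2b nn]
    refine Finset.sum_congr rfl fun n _ => ?_
    rw [show (rh.left i ⊗ₜ[k] (rh2 i).left n) * u
        = (rh.left i ⊗ₜ[k] (1:H)) * (((1:H) ⊗ₜ[k] (rh2 i).left n) * u) by
      rw [← mul_assoc, Algebra.TensorProduct.tmul_mul_tmul, one_mul, mul_one]]
    rw [hΛ, u2R, u2L, ← hΛ, F₁_apply]
  rw [Finset.sum_congr rfl fun i _ => b2 i]
  have pull : Λ (∑ i ∈ rh.index, ∑ n ∈ (rh2 i).index,
      (rh.left i ⊗ₜ[k] (rh2 i).left n) * u * (γ ((rh2 i).right n) ⊗ₜ[k] (1 : H)))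
      = ∑ i ∈ rh.index, ∑ n ∈ (rh2 i).index,
        Λ ((rh.left i ⊗ₜ[k] (rh2 i).left n) * u * (γ ((rh2 i).right n) ⊗ₜ[k] (1 : H))) := by
    simp only [map_sum]
  rw [← pull, I1 u hQT h rh rh1 rh2]


lemma main_thm (R Rinv : H ⊗[k] H) (hR : IsTriangular k H R Rinv) (ξ : H)
    (hξ : IsQuasiPrimitive k H (comulL k H) (adAct k H LinearMap.id) R ξ) :
    ∀ h : H, IsQuasiPrimitive k H (comulL k H) (adAct k H LinearMap.id) R
      ((adAct k H LinearMap.id) h ξ) := by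
  intro h
  classical
  have hQT : ∀ x : H, (TensorProduct.comm k H H) R
        * (TensorProduct.comm k H H) (comulL k H x)
      = comulL k H x * (TensorProduct.comm k H H) R := by
    intro x
    have hx := hR.2.2.1 x
    have h2 := congrArg (TensorProduct.comm k H H) hx
    rw [comm_mul, comm_mul, comm_comm] at h2
    exact h2
  unfold IsQuasiPrimitive at hξ ⊢
  set u := (TensorProduct.comm k H H) R with hu
  set rh := ℛ k h with hrh
  have expand : ∀ i, comulL k H (rh.left i * ξ * anti k H (rh.right i))
      = comulL k H (rh.left i) * (ξ ⊗ₜ[k] (1:H)) * Kmap (rh.right i)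
        + comulL k H (rh.left i)
            * (TensorProduct.map LinearMap.id ((adAct k H LinearMap.id).flip ξ)) u
            * Kmap (rh.right i) := by
    intro i
    rw [comulL_mul, comulL_mul, comulK, hξ, mul_add, add_mul]
  calc comulL k H ((adAct k H LinearMap.id) h ξ)
      = ∑ i ∈ rh.index, comulL k H (rh.left i * ξ * anti k H (rh.right i)) := by
        rw [ad_repr h ξ rh, map_sum]
    _ = (∑ i ∈ rh.index, comulL k H (rh.left i) * (ξ ⊗ₜ[k] (1:H)) * Kmap (rh.right i))
        + ∑ i ∈ rh.index, comulL k H (rh.left i)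
            * (TensorProduct.map LinearMap.id ((adAct k H LinearMap.id).flip ξ)) u
            * Kmap (rh.right i) := by
        rw [Finset.sum_congr rfl fun i _ => expand i, Finset.sum_add_distrib]
    _ = (adAct k H LinearMap.id h ξ) ⊗ₜ[k] (1:H)
        + (TensorProduct.map LinearMap.id
            ((adAct k H LinearMap.id).flip ((adAct k H LinearMap.id) h ξ))) u := by
        rw [chainA ξ h rh, chainB u hQT ξ h rh, u1 u ξ h]

end Infra

/-- `Lie(H) = {ξ : Δ(ξ) = ξ⊗1 + Σ R₂ ⊗ ad(R₁)(ξ)}` is invariant under the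
adjoint action of `H` on itself. -/
theorem lieH_invariant_under_adjoint
    (R Rinv : H ⊗[k] H) (hR : IsTriangular k H R Rinv)
    (ξ : H)
    (hξ : IsQuasiPrimitive k H (comulL k H) (adAct k H LinearMap.id) R ξ) :
    ∀ h : H, IsQuasiPrimitive k H (comulL k H) (adAct k H LinearMap.id) R
      ((adAct k H LinearMap.id) h ξ) := by
  exact main_thm R Rinv hR ξ hξ

end
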